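/- Timed traces are closed under concatenation: if tt₁ and tt₂ are partial functions ℝ≥0 →. Σ with domains [0,m) and [0,n) respectively (Σ a topological space), then tt₁ and tt₂ are both timed traces (piecewise continuous in the sense of the definition) if and only if tt₁ ⌢ tt₂ is a timed trace. -/

import Mathlib

open scoped Classical

/-- Right-shift of a partial function on ℝ≥0: domain shifted right by `n`,
with `(f ≫ n) x = f (x - n)`. -/
noncomputable def pShift {σ : Type*} (f : NNReal →. σ) (n : NNReal) : NNReal →. σ :=
  fun x => if n ≤ x then f (x - n) else Part.none

/-- Union of two partial functions (intended for disjoint domains):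
agrees with `f` on `f.Dom` and with `g` elsewhere. -/
noncomputable def pUnion {σ : Type*} (f g : NNReal →. σ) : NNReal →. σ :=
  fun x => if x ∈ f.Dom then f x else g x

/-- The end point of a partial function whose domain is `[0, t)`. -/
noncomputable def tend {σ : Type*} (f : NNReal →. σ) : NNReal :=
  sInf {x | x ∉ f.Dom}

/-- Concatenation: `f ⌢ g = f ∪ (g ≫ end f)`. -/
noncomputable def pCat {σ : Type*} (f g : NNReal →. σ) : NNReal →. σ :=
  pUnion f (pShift g (tend f))

/-- `F` is right-continuous on `[a, b)`. -/
def ContOnIco {σ : Type*} [TopologicalSpace σ] (F : NNReal → σ) (a b : NNReal) : Prop :=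
  ∀ s ∈ Set.Ico a b, Filter.Tendsto F (nhdsWithin s (Set.Ioi s)) (nhds (F s))

/-- A timed trace: a partial function with domain `[0, t)`, piecewise
right-continuous with respect to a finite strictly increasing sequence of
instants `I` containing `0` and `t` and contained in `[0, t]`. -/
def IsTimedTrace {σ : Type*} [TopologicalSpace σ] (f : NNReal →. σ) : Prop :=
  ∃ t : NNReal, f.Dom = Set.Iio t ∧
    (0 < t → ∃ (I : List NNReal) (F : NNReal → σ),
      (∀ x (hx : x ∈ f.Dom), f x = Part.some (F x)) ∧
      I.Pairwise (· < ·) ∧ (∀ i ∈ I, i ≤ t) ∧ (0 : NNReal) ∈ I ∧ t ∈ I ∧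
      ∀ (k : ℕ) (hk : k + 1 < I.length),
        ContOnIco F (I.get ⟨k, Nat.lt_of_succ_lt hk⟩) (I.get ⟨k + 1, hk⟩))

section Aux

open Filter Set

variable {σ : Type*} [TopologicalSpace σ]

lemma myIio_inj {a b : NNReal} (h : Set.Iio a = Set.Iio b) : a = b := by
  rcases lt_trichotomy a b with hlt | he | hlt
  · have h1 : a ∈ Set.Iio b := hlt
    rw [← h] at h1
    exact absurd h1 (lt_irrefl a)
  · exact he
  · have h1 : b ∈ Set.Iio a := hlt
    rw [h] at h1
    exact absurd h1 (lt_irrefl b)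

lemma tend_eq {f : NNReal →. σ} {m : NNReal} (hf : f.Dom = Set.Iio m) : tend f = m := by
  unfold tend
  have h : {x | x ∉ f.Dom} = Set.Ici m := by
    ext x; simp [hf, not_lt]
  rw [h, csInf_Ici]

lemma pCat_lt {f g : NNReal →. σ} {m x : NNReal} (hf : f.Dom = Set.Iio m) (hx : x < m) :
    pCat f g x = f x := by
  have h : x ∈ f.Dom := by rw [hf]; exact hx
  simp [pCat, pUnion, h]

lemma pCat_ge {f g : NNReal →. σ} {m x : NNReal} (hf : f.Dom = Set.Iio m) (hx : m ≤ x) :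
    pCat f g x = g (x - m) := by
  have h : x ∉ f.Dom := by rw [hf]; simpa using hx
  simp [pCat, pUnion, h, pShift, tend_eq hf, hx]

lemma dom_pCat {f g : NNReal →. σ} {m n : NNReal}
    (hf : f.Dom = Set.Iio m) (hg : g.Dom = Set.Iio n) :
    (pCat f g).Dom = Set.Iio (m + n) := by
  ext x
  have hmem : ∀ (h : NNReal →. σ) (y : NNReal), y ∈ h.Dom ↔ (h y).Dom := fun _ _ => Iff.rfl
  by_cases hx : x < m
  · have h1 : (pCat f g x).Dom := by
      rw [pCat_lt hf hx]
      exact (hmem f x).mp (by rw [hf]; exact hx)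
    simp only [hmem, Set.mem_Iio]
    exact iff_of_true h1 (lt_of_lt_of_le hx le_self_add)
  · push_neg at hx
    rw [hmem, pCat_ge hf hx, Set.mem_Iio]
    have h2 : (g (x - m)).Dom ↔ x - m < n := by rw [← hmem, hg]; exact Iff.rfl
    rw [h2, tsub_lt_iff_right hx, add_comm]

/-- Right-shift of the right-neighborhood filter. -/
lemma tendsto_add_right_nhdsGT (s c : NNReal) :
    Filter.Tendsto (fun x : NNReal => x + c) (nhdsWithin s (Set.Ioi s))
      (nhdsWithin (s + c) (Set.Ioi (s + c))) := by
  apply tendsto_nhdsWithin_of_tendsto_nhds_of_eventually_within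
  · exact ((continuous_add_right c).tendsto s).mono_left nhdsWithin_le_nhds
  · filter_upwards [self_mem_nhdsWithin] with x hx
    exact (add_lt_add_iff_right c).mpr hx

lemma tendsto_sub_right_nhdsGT {s c : NNReal} (hc : c ≤ s) :
    Filter.Tendsto (fun x : NNReal => x - c) (nhdsWithin s (Set.Ioi s))
      (nhdsWithin (s - c) (Set.Ioi (s - c))) := by
  apply tendsto_nhdsWithin_of_tendsto_nhds_of_eventually_within
  · exact ((continuous_id.sub continuous_const).tendsto s).mono_left nhdsWithin_le_nhds
  · filter_upwards [self_mem_nhdsWithin] with x hx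
    exact tsub_lt_tsub_right_of_le hc hx

/-- In a sorted list containing `0` and `t`, every `s < t` lies in some
consecutive interval. -/
lemma sorted_cover {I : List NNReal} {t s : NNReal} (hsort : I.Pairwise (· < ·))
    (h0 : (0 : NNReal) ∈ I) (ht : t ∈ I) (hst : s < t) :
    ∃ (k : ℕ) (hk : k + 1 < I.length),
      I.get ⟨k, Nat.lt_of_succ_lt hk⟩ ≤ s ∧ s < I.get ⟨k + 1, hk⟩ := by
  obtain ⟨jt, hjt⟩ := List.mem_iff_get.mp ht
  have hP : ∃ k : ℕ, ∃ h : k < I.length, s < I.get ⟨k, h⟩ := ⟨jt.1, jt.2, by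
    rw [show (⟨jt.1, jt.2⟩ : Fin I.length) = jt from rfl, hjt]; exact hst⟩
  classical
  let k0 := Nat.find hP
  obtain ⟨hk0len, hk0s⟩ : ∃ h : k0 < I.length, s < I.get ⟨k0, h⟩ := Nat.find_spec hP
  have hlen0 : 0 < I.length := List.length_pos_iff.mpr (List.ne_nil_of_mem h0)
  have hhead : I.get ⟨0, hlen0⟩ = 0 := by
    obtain ⟨j0, hj0⟩ := List.mem_iff_get.mp h0
    refine le_antisymm ?_ (zero_le)
    rcases Nat.eq_zero_or_pos j0.1 with hj | hj
    · rw [← hj0]; exact le_of_eq (by congr 1; exact (Fin.ext hj.symm))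
    · have := hsort.rel_get_of_lt (a := ⟨0, hlen0⟩) (b := j0) (by exact hj)
      rw [hj0] at this
      exact le_of_lt this
  have hk0ne : k0 ≠ 0 := by
    intro h
    have : s < I.get ⟨0, hlen0⟩ := by
      have := hk0s
      simp only [h] at this
      exact this
    rw [hhead] at this
    exact absurd this (by simp)
  have hk1 : k0 - 1 + 1 = k0 := Nat.succ_pred_eq_of_pos (Nat.pos_of_ne_zero hk0ne)
  refine ⟨k0 - 1, by omega, ?_, ?_⟩
  · have hnot := Nat.find_min hP (m := k0 - 1) (by omega)
    push_neg at hnot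
    exact hnot (by omega)
  · have : (⟨k0 - 1 + 1, by omega⟩ : Fin I.length) = ⟨k0, hk0len⟩ := Fin.ext hk1
    rw [this]
    exact hk0s

/-- Simplified characterisation of timed traces. -/
lemma tt_char (f : NNReal →. σ) :
    IsTimedTrace f ↔ ∃ t : NNReal, f.Dom = Set.Iio t ∧
      (0 < t → ∃ F : NNReal → σ,
        (∀ x (hx : x ∈ f.Dom), f x = Part.some (F x)) ∧ ContOnIco F 0 t) := by
  constructor
  · rintro ⟨t, hdom, h⟩
    refine ⟨t, hdom, fun hpos => ?_⟩
    obtain ⟨I, F, hmatch, hsort, hle, h0, ht, hcont⟩ := h hpos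
    refine ⟨F, hmatch, fun s hs => ?_⟩
    obtain ⟨k, hk, hks, hsk⟩ := sorted_cover hsort h0 ht hs.2
    exact hcont k hk s ⟨hks, hsk⟩
  · rintro ⟨t, hdom, h⟩
    refine ⟨t, hdom, fun hpos => ?_⟩
    obtain ⟨F, hmatch, hcont⟩ := h hpos
    refine ⟨[0, t], F, hmatch, by simp [hpos], ?_, by simp, by simp, ?_⟩
    · intro i hi
      simp only [List.mem_cons, List.mem_singleton, List.not_mem_nil, or_false] at hi
      rcases hi with rfl | rfl
      · exact zero_le
      · exact le_rfl
    · intro k hk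
      have hk0 : k = 0 := by simpa using Nat.lt_of_succ_lt_succ hk
      subst hk0
      exact hcont

end Aux

theorem timed_trace_cat_closure {σ : Type*} [TopologicalSpace σ]
    (f g : NNReal →. σ) (m n : NNReal)
    (hf : f.Dom = Set.Iio m) (hg : g.Dom = Set.Iio n) :
    (IsTimedTrace f ∧ IsTimedTrace g) ↔ IsTimedTrace (pCat f g) := by
  have hdom : (pCat f g).Dom = Set.Iio (m + n) := dom_pCat hf hg
  rw [tt_char, tt_char, tt_char]
  constructor
  · rintro ⟨⟨tf, hdf, hFf⟩, ⟨tg, hdg, hFg⟩⟩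
    have htf : m = tf := myIio_inj (hf.symm.trans hdf)
    have htg : n = tg := myIio_inj (hg.symm.trans hdg)
    subst htf; subst htg
    refine ⟨m + n, hdom, fun hpos => ?_⟩
    rcases eq_or_lt_of_le (zero_le : (0:NNReal) ≤ m) with hm | hm
    · -- m = 0 : pCat f g coincides with g
      have hn : 0 < n := by
        rcases eq_or_lt_of_le (zero_le : (0:NNReal) ≤ n) with hn | hn
        · exfalso; rw [← hm, ← hn] at hpos; simp at hpos
        · exact hn
      obtain ⟨Fg, hgmatch, hgcont⟩ := hFg hn
      refine ⟨fun x => Fg (x - m), fun x hx => ?_, fun s hs => ?_⟩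
      · have hx' : x < m + n := by rw [hdom] at hx; exact hx
        have hge : m ≤ x := by rw [← hm]; exact zero_le
        rw [pCat_ge hf hge]
        refine hgmatch (x - m) ?_
        rw [hg, Set.mem_Iio, tsub_lt_iff_right hge, add_comm]
        exact hx'
      · have hge : m ≤ s := by rw [← hm]; exact zero_le
        have hsn : s - m < n := by rw [tsub_lt_iff_right hge, add_comm]; exact hs.2
        exact (hgcont (s - m) ⟨zero_le, hsn⟩).comp (tendsto_sub_right_nhdsGT hge)
    · -- m > 0
      obtain ⟨Ff, hfmatch, hfcont⟩ := hFf hm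
      rcases eq_or_lt_of_le (zero_le : (0:NNReal) ≤ n) with hn | hn
      · -- n = 0 : pCat f g coincides with f
        refine ⟨Ff, fun x hx => ?_, fun s hs => ?_⟩
        · have hx' : x < m := by
            have : x < m + n := by rw [hdom] at hx; exact hx
            rwa [← hn, add_zero] at this
          rw [pCat_lt hf hx']
          exact hfmatch x (by rw [hf]; exact hx')
        · have hs' : s < m := by
            have := hs.2; rwa [← hn, add_zero] at this
          exact hfcont s ⟨zero_le, hs'⟩
      · -- m > 0, n > 0
        obtain ⟨Fg, hgmatch, hgcont⟩ := hFg hn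
        refine ⟨fun x => if x < m then Ff x else Fg (x - m), fun x hx => ?_, fun s hs => ?_⟩
        · have hx' : x < m + n := by rw [hdom] at hx; exact hx
          beta_reduce
          by_cases hxm : x < m
          · rw [pCat_lt hf hxm, if_pos hxm]
            exact hfmatch x (by rw [hf]; exact hxm)
          · push_neg at hxm
            rw [pCat_ge hf hxm, if_neg (not_lt.mpr hxm)]
            refine hgmatch (x - m) ?_
            rw [hg, Set.mem_Iio, tsub_lt_iff_right hxm, add_comm]
            exact hx'
        · beta_reduce
          by_cases hsm : s < m
          · have hev : ∀ᶠ x in nhdsWithin s (Set.Ioi s),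
                Ff x = (if x < m then Ff x else Fg (x - m)) := by
              have hmem : ∀ᶠ x in nhds s, x ∈ Set.Iio m := isOpen_Iio.eventually_mem hsm
              filter_upwards [hmem.filter_mono nhdsWithin_le_nhds] with x hx
              exact (if_pos hx).symm
            rw [show (if s < m then Ff s else Fg (s - m)) = Ff s from if_pos hsm]
            exact (hfcont s ⟨zero_le, hsm⟩).congr' hev
          · push_neg at hsm
            have hev : ∀ᶠ x in nhdsWithin s (Set.Ioi s),
                Fg (x - m) = (if x < m then Ff x else Fg (x - m)) := by
              filter_upwards [self_mem_nhdsWithin] with x hx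
              exact (if_neg (not_lt.mpr (le_of_lt (lt_of_le_of_lt hsm hx)))).symm
            rw [show (if s < m then Ff s else Fg (s - m)) = Fg (s - m) from
              if_neg (not_lt.mpr hsm)]
            have hsn : s - m < n := by rw [tsub_lt_iff_right hsm, add_comm]; exact hs.2
            exact ((hgcont (s - m) ⟨zero_le, hsn⟩).comp
              (tendsto_sub_right_nhdsGT hsm)).congr' hev
  · rintro ⟨t, hdt, hF⟩
    have ht : t = m + n := myIio_inj (hdt.symm.trans hdom)
    subst ht
    constructor
    · refine ⟨m, hf, fun hm => ?_⟩
      obtain ⟨F, hmatch, hcont⟩ := hF (lt_of_lt_of_le hm le_self_add)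
      refine ⟨F, fun x hx => ?_, fun s hs => ?_⟩
      · have hx' : x < m := by rw [hf] at hx; exact hx
        have : pCat f g x = f x := pCat_lt hf hx'
        rw [← this]
        exact hmatch x (by rw [hdt]; exact lt_of_lt_of_le hx' le_self_add)
      · exact hcont s ⟨zero_le, lt_of_lt_of_le hs.2 le_self_add⟩
    · refine ⟨n, hg, fun hn => ?_⟩
      obtain ⟨F, hmatch, hcont⟩ := hF (lt_of_lt_of_le hn le_add_self)
      refine ⟨fun x => F (x + m), fun x hx => ?_, fun s hs => ?_⟩
      · have hx' : x < n := by rw [hg] at hx; exact hx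
        have h1 : pCat f g (x + m) = g x := by
          rw [pCat_ge hf le_add_self, add_tsub_cancel_right]
        rw [← h1]
        refine hmatch (x + m) ?_
        rw [hdt, Set.mem_Iio, add_comm m n]
        exact (add_lt_add_iff_right m).mpr hx'
      · have hsm : s + m < m + n := by
          rw [add_comm m n]; exact (add_lt_add_iff_right m).mpr hs.2
        exact (hcont (s + m) ⟨zero_le, hsm⟩).comp (tendsto_add_right_nhdsGT s m)
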